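/- Suppose 𝒴 = {0,1}. Let 𝒫*_U be the set of primitive distributions satisfying IV validity, P*(Y(0)=0) = 1, and P*(D(z,1)=1) = 1 for all z ∈ 𝒵 (universal release). Fix an observed data distribution P with P(Z=z) > 0 and P(Y=1, D=0 | Z=z) = 0 for all z ∈ 𝒵. Then the identified set for the average counterfactual outcome satisfies Θ_I(P; 𝒫*_U) = ⋂_{z∈𝒵} [ P(Y=1, D=1 | Z=z), 1 − P(Y=0, D=1 | Z=z) ]; that is, a value v ∈ [0,1] belongs to Θ_I(P; 𝒫*_U) if and only if P(Y=1, D=1 | Z=z) ≤ v ≤ 1 − P(Y=0, D=1 | Z=z) for every z ∈ 𝒵. -/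

import Mathlib

open Finset
open scoped Classical

namespace IVPol

/-- Sample space of model primitives `(Y(0), Y(1), D(·,·), Z)`:
a point records the two potential outcomes (elements of the finite outcome set `Y ⊆ ℝ`),
the potential treatments `D(z, a) ∈ {0,1}` for every judge `z` and policy `a`,
and the instrument value `Z`. -/
abbrev Prim (Y : Finset ℝ) (K : ℕ) := Y × Y × (Fin K → Bool → Bool) × Fin K

/-- Sample space of the observed data `(Y, D, Z)`. -/
abbrev Obs (Y : Finset ℝ) (K : ℕ) := Y × Bool × Fin K

/-- A probability distribution on a finite type, given by its pmf. -/
structure Dist (α : Type*) [Fintype α] where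
  p : α → ℝ
  nonneg : ∀ a, 0 ≤ p a
  sum_one : ∑ a, p a = 1

/-- Probability of an event. -/
noncomputable def Dist.pr {α : Type*} [Fintype α] (P : Dist α) (A : Set α) : ℝ :=
  ∑ a, if a ∈ A then P.p a else 0

/-- Expectation of a real-valued random variable. -/
noncomputable def Dist.exp {α : Type*} [Fintype α] (P : Dist α) (f : α → ℝ) : ℝ :=
  ∑ a, P.p a * f a

variable {Y : Finset ℝ} {K : ℕ}

/-- Potential treatment `D(z, a)`. -/
def pd (ω : Prim Y K) (z : Fin K) (a : Bool) : Bool := ω.2.2.1 z a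

/-- The instrument `Z`. -/
def pz (ω : Prim Y K) : Fin K := ω.2.2.2

/-- Observed treatment `D = D(Z, 0)`. -/
def obsD (ω : Prim Y K) : Bool := pd ω (pz ω) false

/-- Observed outcome `Y = Y(D(Z, 0))`. -/
def obsY (ω : Prim Y K) : Y := if obsD ω then ω.2.1 else ω.1

/-- Counterfactual outcome `Y(D(Z, 1))`. -/
noncomputable def cfY (ω : Prim Y K) : ℝ :=
  if pd ω (pz ω) true then (ω.2.1 : ℝ) else (ω.1 : ℝ)

/-- IV validity: `(Y(0), Y(1), D(·,·))` is independent of `Z`. -/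
def IVvalid (Ps : Dist (Prim Y K)) : Prop :=
  ∀ (a b : Y) (g : Fin K → Bool → Bool) (z : Fin K),
    Ps.pr {ω | ω.1 = a ∧ ω.2.1 = b ∧ ω.2.2.1 = g ∧ ω.2.2.2 = z}
      = Ps.pr {ω | ω.1 = a ∧ ω.2.1 = b ∧ ω.2.2.1 = g} * Ps.pr {ω | ω.2.2.2 = z}

/-- `Ps` generates the observed data distribution `P`:
the law of `(Y(D(Z,0)), D(Z,0), Z)` under `Ps` is `P`. -/
def generates (Ps : Dist (Prim Y K)) (P : Dist (Obs Y K)) : Prop :=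
  ∀ (y : Y) (d : Bool) (z : Fin K),
    P.p (y, d, z) = Ps.pr {ω | obsY ω = y ∧ obsD ω = d ∧ pz ω = z}

/-- Marginal pmf of judge `z`:
`π_z(y0, y1, d0, d1) = P*(Y(0)=y0, Y(1)=y1, D(z,0)=d0, D(z,1)=d1)`. -/
noncomputable def marginal (Ps : Dist (Prim Y K)) (z : Fin K) (y0 y1 : Y) (d0 d1 : Bool) : ℝ :=
  Ps.pr {ω | ω.1 = y0 ∧ ω.2.1 = y1 ∧ pd ω z false = d0 ∧ pd ω z true = d1}

/-- Probability of `Z = z` under the observed distribution. -/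
noncomputable def prZ (P : Dist (Obs Y K)) (z : Fin K) : ℝ := P.pr {o | o.2.2 = z}

/-- Conditional probability `P(Y = y, D = d | Z = z)` of the observed data. -/
noncomputable def obsCond (P : Dist (Obs Y K)) (y : Y) (d : Bool) (z : Fin K) : ℝ :=
  P.p (y, d, z) / prZ P z

/-- Average counterfactual outcome `θ = E[Y(D(Z,1))]`. -/
noncomputable def theta (Ps : Dist (Prim Y K)) : ℝ := Ps.exp cfY

/-- The identified set for the average counterfactual outcome. -/
def ThetaI (P : Dist (Obs Y K)) (fam : Set (Dist (Prim Y K))) : Set ℝ :=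
  {t | ∃ Ps ∈ fam, generates Ps P ∧ theta Ps = t}

/-- The binary outcome set `𝒴 = {0, 1}`. -/
noncomputable abbrev Y01 : Finset ℝ := {0, 1}

/-- The family `𝒫*_U`: IV validity, known outcome `Y(0) = 0`, and universal release
`D(z,1) = 1` for all judges `z`. -/
def famU (K : ℕ) : Set (Dist (Prim Y01 K)) :=
  {Ps | IVvalid Ps ∧ Ps.pr {ω | (ω.1 : ℝ) = 0} = 1 ∧
        ∀ z : Fin K, Ps.pr {ω | pd ω z true = true} = 1}



section Ind

/-- Indicator with a fixed decidability instance, to avoid `ite` instance mismatches. -/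
noncomputable def ind (c : Prop) (x : ℝ) : ℝ := if c then x else 0

lemma ind_pos {c : Prop} (h : c) (x : ℝ) : ind c x = x := by simp [ind, h]

lemma ind_neg {c : Prop} (h : ¬ c) (x : ℝ) : ind c x = 0 := by simp [ind, h]

lemma ite_eq_ind {c : Prop} [Decidable c] (x : ℝ) : (if c then x else 0) = ind c x := by
  by_cases h : c
  · rw [if_pos h, ind_pos h]
  · rw [if_neg h, ind_neg h]

lemma ind_congr {c d : Prop} (h : c ↔ d) (x : ℝ) : ind c x = ind d x := by
  by_cases hc : c
  · rw [ind_pos hc, ind_pos (h.mp hc)]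
  · rw [ind_neg hc, ind_neg (fun hd => hc (h.mpr hd))]

lemma ind_nonneg {c : Prop} {x : ℝ} (hx : 0 ≤ x) : 0 ≤ ind c x := by
  by_cases h : c
  · rwa [ind_pos h]
  · rw [ind_neg h]

lemma ind_le_of_imp {c d : Prop} (h : c → d) {x : ℝ} (hx : 0 ≤ x) : ind c x ≤ ind d x := by
  by_cases hc : c
  · rw [ind_pos hc, ind_pos (h hc)]
  · rw [ind_neg hc]; exact ind_nonneg hx

lemma ind_and (c d : Prop) (x : ℝ) : ind (c ∧ d) x = ind c (ind d x) := by
  by_cases hc : c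
  · by_cases hd : d
    · rw [ind_pos (⟨hc, hd⟩ : c ∧ d), ind_pos hc, ind_pos hd]
    · rw [ind_neg (fun h : c ∧ d => hd h.2), ind_pos hc, ind_neg hd]
  · rw [ind_neg (fun h : c ∧ d => hc h.1), ind_neg hc]

lemma ind_mul (c : Prop) (x y : ℝ) : ind c x * y = ind c (x * y) := by
  by_cases h : c
  · rw [ind_pos h, ind_pos h]
  · rw [ind_neg h, ind_neg h, zero_mul]

lemma mul_ind (c : Prop) (x y : ℝ) : x * ind c y = ind c (x * y) := by
  by_cases h : c
  · rw [ind_pos h, ind_pos h]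
  · rw [ind_neg h, ind_neg h, mul_zero]

lemma sum_ind_left {β : Type*} [Fintype β] (b : β) (f : β → ℝ) :
    ∑ a : β, ind (b = a) (f a) = f b := by
  rw [Finset.sum_eq_single_of_mem b (Finset.mem_univ b)
    (fun a _ hab => ind_neg (fun h => hab h.symm) _)]
  exact ind_pos rfl _

lemma sum_ind_right {β : Type*} [Fintype β] (b : β) (f : β → ℝ) :
    ∑ a : β, ind (a = b) (f a) = f b := by
  rw [Finset.sum_eq_single_of_mem b (Finset.mem_univ b)
    (fun a _ hab => ind_neg hab _)]
  exact ind_pos rfl _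

lemma sum_ind_snd {β γ : Type*} [Fintype β] [Fintype γ] (c : γ) (g : β × γ → ℝ) :
    ∑ x : β × γ, ind (x.2 = c) (g x) = ∑ b : β, g (b, c) := by
  rw [Fintype.sum_prod_type_right]
  have h : ∀ c' : γ, (∑ b : β, ind ((b, c').2 = c) (g (b, c')))
      = ind (c' = c) (∑ b : β, g (b, c')) := by
    intro c'
    by_cases hc : c' = c
    · rw [ind_pos hc]
      exact Finset.sum_congr rfl fun b _ => ind_pos hc _
    · rw [ind_neg hc]
      exact Finset.sum_eq_zero fun b _ => ind_neg hc _
  rw [Finset.sum_congr rfl fun c' _ => h c']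
  rw [sum_ind_right c (fun c' => ∑ b : β, g (b, c'))]

end Ind

section Aux

variable {α : Type*} [Fintype α]

lemma Dist.pr_eq (P : Dist α) (A : Set α) : P.pr A = ∑ a, ind (a ∈ A) (P.p a) :=
  Finset.sum_congr rfl fun a _ => ite_eq_ind _

lemma Dist.pr_nonneg (P : Dist α) (A : Set α) : 0 ≤ P.pr A := by
  rw [P.pr_eq]
  exact Finset.sum_nonneg fun a _ => ind_nonneg (P.nonneg a)

lemma Dist.pr_mono (P : Dist α) {A B : Set α} (h : A ⊆ B) : P.pr A ≤ P.pr B := by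
  rw [P.pr_eq, P.pr_eq]
  exact Finset.sum_le_sum fun a _ => ind_le_of_imp (fun ha => h ha) (P.nonneg a)

lemma Dist.pr_congr (P : Dist α) {A B : Set α} (h : ∀ a, a ∈ A ↔ a ∈ B) :
    P.pr A = P.pr B := by
  rw [P.pr_eq, P.pr_eq]
  exact Finset.sum_congr rfl fun a _ => ind_congr (h a) _

lemma Dist.pr_add_compl (P : Dist α) (A : Set α) : P.pr A + P.pr Aᶜ = 1 := by
  rw [P.pr_eq, P.pr_eq, ← Finset.sum_add_distrib, ← P.sum_one]
  refine Finset.sum_congr rfl fun a _ => ?_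
  by_cases h : a ∈ A
  · rw [ind_pos h, ind_neg (fun hc => hc h), add_zero]
  · rw [ind_neg h, ind_pos (show a ∈ Aᶜ from h), zero_add]

lemma Dist.p_eq_zero (P : Dist α) {A : Set α} (hA : P.pr A = 1) {a : α} (ha : a ∉ A) :
    P.p a = 0 := by
  have h0 : P.pr Aᶜ = 0 := by have := P.pr_add_compl A; linarith
  have h1 : P.p a ≤ P.pr Aᶜ := by
    rw [P.pr_eq]
    calc P.p a = ind (a ∈ Aᶜ) (P.p a) := (ind_pos (show a ∈ Aᶜ from ha) _).symm
      _ ≤ ∑ b, ind (b ∈ Aᶜ) (P.p b) :=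
        Finset.single_le_sum (fun b _ => ind_nonneg (P.nonneg b)) (Finset.mem_univ a)
  linarith [P.nonneg a]

lemma Dist.pr_singleton (P : Dist α) (a0 : α) : P.pr {a | a = a0} = P.p a0 := by
  rw [P.pr_eq]
  exact sum_ind_right a0 P.p

/-- A finite mixture of point masses. -/
noncomputable def mixDist {ι : Type*} [Fintype ι] (w : ι → ℝ) (x : ι → α)
    (hw : ∀ i, 0 ≤ w i) (hsum : ∑ i, w i = 1) : Dist α where
  p a := ∑ i, ind (a = x i) (w i)
  nonneg a := Finset.sum_nonneg fun i _ => ind_nonneg (hw i)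
  sum_one := by
    rw [Finset.sum_comm, ← hsum]
    exact Finset.sum_congr rfl fun i _ => sum_ind_right (x i) (fun _ => w i)

lemma mixDist_pr {ι : Type*} [Fintype ι] (w : ι → ℝ) (x : ι → α)
    (hw : ∀ i, 0 ≤ w i) (hsum : ∑ i, w i = 1) (A : Set α) :
    (mixDist w x hw hsum).pr A = ∑ i, ind (x i ∈ A) (w i) := by
  rw [Dist.pr_eq]
  show (∑ a, ind (a ∈ A) (∑ i, ind (a = x i) (w i))) = _
  have h : ∀ a, ind (a ∈ A) (∑ i, ind (a = x i) (w i))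
      = ∑ i, ind (a = x i) (ind (x i ∈ A) (w i)) := by
    intro a
    by_cases ha : a ∈ A
    · rw [ind_pos ha]
      refine Finset.sum_congr rfl fun i _ => ?_
      by_cases h : a = x i
      · rw [ind_pos h, ind_pos h, ind_pos (h ▸ ha)]
      · rw [ind_neg h, ind_neg h]
    · rw [ind_neg ha]
      refine (Finset.sum_eq_zero fun i _ => ?_).symm
      by_cases h : a = x i
      · rw [ind_pos h, ind_neg (h ▸ ha)]
      · rw [ind_neg h]
  rw [Finset.sum_congr rfl fun a _ => h a, Finset.sum_comm]
  exact Finset.sum_congr rfl fun i _ => sum_ind_right (x i) _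

lemma mixDist_exp {ι : Type*} [Fintype ι] (w : ι → ℝ) (x : ι → α)
    (hw : ∀ i, 0 ≤ w i) (hsum : ∑ i, w i = 1) (f : α → ℝ) :
    (mixDist w x hw hsum).exp f = ∑ i, w i * f (x i) := by
  show (∑ a, (∑ i, ind (a = x i) (w i)) * f a) = _
  have h : ∀ a, (∑ i, ind (a = x i) (w i)) * f a
      = ∑ i, ind (a = x i) (w i * f (x i)) := by
    intro a
    rw [Finset.sum_mul]
    refine Finset.sum_congr rfl fun i _ => ?_
    by_cases h : a = x i
    · rw [ind_pos h, ind_pos h, h]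
    · rw [ind_neg h, ind_neg h, zero_mul]
  rw [Finset.sum_congr rfl fun a _ => h a, Finset.sum_comm]
  exact Finset.sum_congr rfl fun i _ => sum_ind_right (x i) _

/-- Telescoping sum over an indicator of a lower set. -/
lemma tele_sum {m j : ℕ} (f : ℕ → ℝ) (c : ℝ) (hj : j ≤ m)
    (h1 : ∀ i, i < j → f (i + 1) ≤ c)
    (h2 : ∀ i, j ≤ i → i < m → ¬ f (i + 1) ≤ c) :
    ∑ i ∈ Finset.range m, ind (f (i + 1) ≤ c) (f (i + 1) - f i) = f j - f 0 := by
  have h : ∀ i ∈ Finset.range m, ind (f (i + 1) ≤ c) (f (i + 1) - f i)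
      = (if i < j then f (i + 1) - f i else 0) := by
    intro i hi
    rw [Finset.mem_range] at hi
    by_cases h : i < j
    · rw [ind_pos (h1 i h), if_pos h]
    · rw [ind_neg (h2 i (Nat.le_of_not_lt h) hi), if_neg h]
  rw [Finset.sum_congr rfl h]
  rw [← Finset.sum_subset (Finset.range_mono hj)
    (fun i _ hi => by simp [Finset.mem_range] at hi; simp [Nat.not_lt.2 hi])]
  rw [show (∑ i ∈ Finset.range j, if i < j then f (i + 1) - f i else 0)
      = ∑ i ∈ Finset.range j, (f (i + 1) - f i) from
    Finset.sum_congr rfl (fun i hi => by simp [Finset.mem_range.1 hi])]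
  exact Finset.sum_range_sub f j

end Aux

section Y01Aux

/-- The element `0` of the binary outcome set. -/
noncomputable def o0 : Y01 := ⟨0, by simp⟩
/-- The element `1` of the binary outcome set. -/
noncomputable def o1 : Y01 := ⟨1, by simp⟩

lemma o0_ne_o1 : o0 ≠ o1 := by
  intro h
  have : (0 : ℝ) = 1 := congrArg Subtype.val h
  norm_num at this

lemma y01_cases (y : Y01) : y = o0 ∨ y = o1 := by
  have := y.2
  simp only [Y01, Finset.mem_insert, Finset.mem_singleton] at this
  rcases this with h | h
  · exact Or.inl (Subtype.ext h)
  · exact Or.inr (Subtype.ext h)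

lemma coe_o0 : ((o0 : Y01) : ℝ) = 0 := rfl
lemma coe_o1 : ((o1 : Y01) : ℝ) = 1 := rfl

lemma univ_Y01 : (Finset.univ : Finset Y01) = {o0, o1} := by
  ext y
  simp only [Finset.mem_univ, Finset.mem_insert, Finset.mem_singleton, true_iff]
  exact y01_cases y

lemma sum_Y01 (F : Y01 → ℝ) : ∑ y : Y01, F y = F o0 + F o1 := by
  rw [univ_Y01, Finset.sum_pair o0_ne_o1]

variable {K : ℕ}

lemma pr_obs_one (P : Dist (Obs Y01 K)) (z : Fin K) (d : Bool) :
    P.pr {o | (o.1 : ℝ) = 1 ∧ o.2.1 = d ∧ o.2.2 = z} = P.p (o1, d, z) := by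
  rw [← P.pr_singleton (o1, d, z)]
  apply P.pr_congr
  rintro ⟨y, d', z'⟩
  simp only [Set.mem_setOf_eq, Prod.mk.injEq]
  constructor
  · rintro ⟨h1, h2, h3⟩
    exact ⟨Subtype.ext h1, h2, h3⟩
  · rintro ⟨h1, h2, h3⟩
    exact ⟨congrArg Subtype.val h1, h2, h3⟩

lemma pr_obs_zero (P : Dist (Obs Y01 K)) (z : Fin K) (d : Bool) :
    P.pr {o | (o.1 : ℝ) = 0 ∧ o.2.1 = d ∧ o.2.2 = z} = P.p (o0, d, z) := by
  rw [← P.pr_singleton (o0, d, z)]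
  apply P.pr_congr
  rintro ⟨y, d', z'⟩
  simp only [Set.mem_setOf_eq, Prod.mk.injEq]
  constructor
  · rintro ⟨h1, h2, h3⟩
    exact ⟨Subtype.ext h1, h2, h3⟩
  · rintro ⟨h1, h2, h3⟩
    exact ⟨congrArg Subtype.val h1, h2, h3⟩

lemma prZ_eq_sum (P : Dist (Obs Y01 K)) (z : Fin K) :
    prZ P z = P.p (o0, false, z) + P.p (o0, true, z)
      + (P.p (o1, false, z) + P.p (o1, true, z)) := by
  unfold prZ
  rw [Dist.pr_eq]
  have h : ∀ o : Obs Y01 K, ind (o ∈ {o : Obs Y01 K | o.2.2 = z}) (P.p o)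
      = ind (o.2.2 = z) (P.p o) := fun o => ind_congr Iff.rfl _
  rw [Finset.sum_congr rfl fun o _ => h o]
  rw [show (∑ o : Obs Y01 K, ind (o.2.2 = z) (P.p o))
      = ∑ y : Y01, ∑ dz : Bool × Fin K, ind (dz.2 = z) (P.p (y, dz)) from
    Fintype.sum_prod_type _]
  rw [sum_Y01 (fun y => ∑ dz : Bool × Fin K, ind (dz.2 = z) (P.p (y, dz)))]
  have h2 : ∀ y : Y01, (∑ dz : Bool × Fin K, ind (dz.2 = z) (P.p (y, dz)))
      = P.p (y, false, z) + P.p (y, true, z) := by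
    intro y
    rw [sum_ind_snd z (fun dz => P.p (y, dz)), Fintype.sum_bool]
    exact add_comm _ _
  rw [h2 o0, h2 o1]

lemma sum_prZ (P : Dist (Obs Y01 K)) : ∑ z : Fin K, prZ P z = 1 := by
  unfold prZ
  have h : ∀ z : Fin K, P.pr {o : Obs Y01 K | o.2.2 = z}
      = ∑ o : Obs Y01 K, ind (o.2.2 = z) (P.p o) := fun z => P.pr_eq _
  rw [Finset.sum_congr rfl fun z _ => h z, Finset.sum_comm, ← P.sum_one]
  exact Finset.sum_congr rfl fun o _ => sum_ind_left o.2.2 (fun _ => P.p o)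

end Y01Aux



section Necessity

lemma ind_zero (c : Prop) : ind c 0 = 0 := by
  by_cases h : c
  · rw [ind_pos h]
  · rw [ind_neg h]

lemma sum_ind {β : Type*} [Fintype β] (c : Prop) (f : β → ℝ) :
    ∑ x : β, ind c (f x) = ind c (∑ x : β, f x) := by
  by_cases h : c
  · simp only [ind_pos h]
  · simp only [ind_neg h, Finset.sum_const_zero]

lemma sum_ind_and_eq {β : Type*} [Fintype β] (b : β) (c : β → Prop) (f : β → ℝ) :
    ∑ x : β, ind (c x ∧ x = b) (f x) = ind (c b) (f b) := by
  rw [Finset.sum_eq_single_of_mem b (Finset.mem_univ b)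
    (fun x _ hx => ind_neg (fun h => hx h.2) _)]
  exact ind_congr (and_iff_left rfl) _

lemma sum_ind_and_eq' {β : Type*} [Fintype β] (b : β) (c : β → Prop) (f : β → ℝ) :
    ∑ x : β, ind (c x ∧ b = x) (f x) = ind (c b) (f b) := by
  rw [Finset.sum_eq_single_of_mem b (Finset.mem_univ b)
    (fun x _ hx => ind_neg (fun h => hx h.2.symm) _)]
  exact ind_congr (and_iff_left rfl) _

variable {K : ℕ}

lemma prim_singleton (Ps : Dist (Prim Y01 K)) (a b : Y01) (g : Fin K → Bool → Bool)
    (z : Fin K) :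
    Ps.pr {ω | ω.1 = a ∧ ω.2.1 = b ∧ ω.2.2.1 = g ∧ ω.2.2.2 = z} = Ps.p (a, b, g, z) := by
  rw [← Ps.pr_singleton (a, b, g, z)]
  apply Ps.pr_congr
  rintro ⟨a', b', g', z'⟩
  simp only [Set.mem_setOf_eq, Prod.mk.injEq]

lemma pr_triple_eq (Ps : Dist (Prim Y01 K)) (a b : Y01) (g : Fin K → Bool → Bool) :
    Ps.pr {ω | ω.1 = a ∧ ω.2.1 = b ∧ ω.2.2.1 = g} = ∑ z' : Fin K, Ps.p (a, b, g, z') := by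
  rw [Dist.pr_eq]
  simp only [Fintype.sum_prod_type, Set.mem_setOf_eq]
  rw [Finset.sum_congr rfl fun a' _ => Finset.sum_congr rfl fun b' _ =>
      Finset.sum_congr rfl fun g' _ => sum_ind _ _]
  rw [Finset.sum_congr rfl fun a' _ => Finset.sum_congr rfl fun b' _ =>
      Finset.sum_congr rfl fun g' _ => ind_congr and_assoc.symm _]
  rw [Finset.sum_congr rfl fun a' _ => Finset.sum_congr rfl fun b' _ =>
      sum_ind_and_eq g (fun _ => a' = a ∧ b' = b) _]
  rw [Finset.sum_congr rfl fun a' _ =>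
      sum_ind_and_eq b (fun _ => a' = a) (fun b' => ∑ z' : Fin K, Ps.p (a', b', g, z'))]
  exact sum_ind_right a (fun a' => ∑ z' : Fin K, Ps.p (a', b, g, z'))

lemma pr_condz (Ps : Dist (Prim Y01 K)) (C : Y01 → Y01 → (Fin K → Bool → Bool) → Prop)
    (z : Fin K) :
    Ps.pr {ω | C ω.1 ω.2.1 ω.2.2.1 ∧ ω.2.2.2 = z}
      = ∑ a : Y01, ∑ b : Y01, ∑ g : Fin K → Bool → Bool, ind (C a b g) (Ps.p (a, b, g, z)) := by
  rw [Dist.pr_eq]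
  simp only [Fintype.sum_prod_type, Set.mem_setOf_eq]
  rw [Finset.sum_congr rfl fun a _ => Finset.sum_congr rfl fun b _ =>
      Finset.sum_congr rfl fun g _ => sum_ind_and_eq z (fun _ => C a b g) _]

lemma pr_cond (Ps : Dist (Prim Y01 K)) (C : Y01 → Y01 → (Fin K → Bool → Bool) → Prop) :
    Ps.pr {ω | C ω.1 ω.2.1 ω.2.2.1}
      = ∑ a : Y01, ∑ b : Y01, ∑ g : Fin K → Bool → Bool,
          ind (C a b g) (∑ z' : Fin K, Ps.p (a, b, g, z')) := by
  rw [Dist.pr_eq]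
  simp only [Fintype.sum_prod_type, Set.mem_setOf_eq]
  rw [Finset.sum_congr rfl fun a _ => Finset.sum_congr rfl fun b _ =>
      Finset.sum_congr rfl fun g _ => sum_ind _ _]

lemma pr_indep (Ps : Dist (Prim Y01 K)) (hIV : IVvalid Ps)
    (C : Y01 → Y01 → (Fin K → Bool → Bool) → Prop) (z : Fin K) :
    Ps.pr {ω | C ω.1 ω.2.1 ω.2.2.1 ∧ ω.2.2.2 = z}
      = Ps.pr {ω | C ω.1 ω.2.1 ω.2.2.1} * Ps.pr {ω : Prim Y01 K | ω.2.2.2 = z} := by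
  have atom : ∀ a b g, Ps.p (a, b, g, z)
      = (∑ z' : Fin K, Ps.p (a, b, g, z')) * Ps.pr {ω : Prim Y01 K | ω.2.2.2 = z} := by
    intro a b g
    have h := hIV a b g z
    rwa [prim_singleton, pr_triple_eq] at h
  rw [pr_condz, pr_cond, Finset.sum_mul]
  refine Finset.sum_congr rfl fun a _ => ?_
  rw [Finset.sum_mul]
  refine Finset.sum_congr rfl fun b _ => ?_
  rw [Finset.sum_mul]
  refine Finset.sum_congr rfl fun g _ => ?_
  rw [ind_mul, ← atom a b g]

lemma pr_z_split (Ps : Dist (Prim Y01 K)) (z : Fin K) :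
    ∑ y : Y01, ∑ d : Bool, Ps.pr {ω | obsY ω = y ∧ obsD ω = d ∧ pz ω = z}
      = Ps.pr {ω | pz ω = z} := by
  have hω : ∀ ω : Prim Y01 K,
      (∑ y : Y01, ∑ d : Bool, ind (obsY ω = y ∧ obsD ω = d ∧ pz ω = z) (Ps.p ω))
        = ind (pz ω = z) (Ps.p ω) := by
    intro ω
    have hd : ∀ y : Y01, (∑ d : Bool, ind (obsY ω = y ∧ obsD ω = d ∧ pz ω = z) (Ps.p ω))
        = ind (obsY ω = y ∧ pz ω = z) (Ps.p ω) := by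
      intro y
      rw [Finset.sum_congr rfl fun d _ => ind_congr
        (show (obsY ω = y ∧ obsD ω = d ∧ pz ω = z)
          ↔ ((obsY ω = y ∧ pz ω = z) ∧ obsD ω = d) by tauto) _]
      exact sum_ind_and_eq' (obsD ω) (fun _ => obsY ω = y ∧ pz ω = z) _
    rw [Finset.sum_congr rfl fun y _ => hd y]
    rw [Finset.sum_congr rfl fun y _ => ind_congr
      (show (obsY ω = y ∧ pz ω = z) ↔ ((pz ω = z) ∧ obsY ω = y) by tauto) _]
    exact sum_ind_and_eq' (obsY ω) (fun _ => pz ω = z) _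
  simp only [Dist.pr_eq, Set.mem_setOf_eq]
  rw [Finset.sum_congr rfl fun y _ => Finset.sum_comm, Finset.sum_comm]
  exact Finset.sum_congr rfl fun ω _ => hω ω

lemma prZ_match (P : Dist (Obs Y01 K)) (Ps : Dist (Prim Y01 K))
    (hgen : generates Ps P) (z : Fin K) :
    Ps.pr {ω : Prim Y01 K | ω.2.2.2 = z} = prZ P z := by
  have h : Ps.pr {ω : Prim Y01 K | ω.2.2.2 = z} = Ps.pr {ω | pz ω = z} :=
    Ps.pr_congr (fun ω => Iff.rfl)
  rw [h, ← pr_z_split Ps z, prZ_eq_sum]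
  rw [sum_Y01 (fun y => ∑ d : Bool, Ps.pr {ω | obsY ω = y ∧ obsD ω = d ∧ pz ω = z})]
  rw [Fintype.sum_bool, Fintype.sum_bool]
  rw [← hgen o0 true z, ← hgen o0 false z, ← hgen o1 true z, ← hgen o1 false z]
  ring

lemma theta_eq (Ps : Dist (Prim Y01 K)) (hfam : Ps ∈ famU K) :
    theta Ps = Ps.pr {ω : Prim Y01 K | ((ω.2.1 : Y01) : ℝ) = 1} := by
  obtain ⟨hIV, hY0, hRel⟩ := hfam
  rw [theta, Dist.exp, Dist.pr_eq]
  refine Finset.sum_congr rfl fun ω _ => ?_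
  simp only [Set.mem_setOf_eq]
  by_cases hp : Ps.p ω = 0
  · rw [hp, zero_mul, ind_zero]
  · have hr : pd ω (pz ω) true = true := by
      by_contra h
      exact hp (Ps.p_eq_zero (hRel (pz ω)) h)
    have hcf : cfY ω = ((ω.2.1 : Y01) : ℝ) := by
      rw [cfY, hr]
      simp
    rw [hcf]
    rcases y01_cases ω.2.1 with h | h
    · rw [h, coe_o0, mul_zero, ind_neg (by norm_num)]
    · rw [h, coe_o1, mul_one, ind_pos rfl]

lemma necessity (P : Dist (Obs Y01 K)) (hPz : ∀ z : Fin K, 0 < prZ P z)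
    (Ps : Dist (Prim Y01 K)) (hfam : Ps ∈ famU K) (hgen : generates Ps P) (z : Fin K) :
    P.p (o1, true, z) / prZ P z ≤ theta Ps ∧
      theta Ps ≤ 1 - P.p (o0, true, z) / prZ P z := by
  obtain ⟨hIV, hY0, hRel⟩ := hfam
  have hθ : theta Ps = Ps.pr {ω : Prim Y01 K | ((ω.2.1 : Y01) : ℝ) = 1} :=
    theta_eq Ps ⟨hIV, hY0, hRel⟩
  set μ := Ps.pr {ω : Prim Y01 K | ((ω.2.1 : Y01) : ℝ) = 1} with hμ
  -- P(Y=1,D=1,Z=z)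
  have h1 : P.p (o1, true, z)
      = Ps.pr {ω : Prim Y01 K | ω.2.1 = o1 ∧ ω.2.2.1 z false = true} * prZ P z := by
    rw [hgen o1 true z]
    have hset : Ps.pr {ω | obsY ω = o1 ∧ obsD ω = true ∧ pz ω = z}
        = Ps.pr {ω : Prim Y01 K |
            (ω.2.1 = o1 ∧ ω.2.2.1 z false = true) ∧ ω.2.2.2 = z} := by
      apply Ps.pr_congr
      intro ω
      simp only [Set.mem_setOf_eq, obsY, obsD, pd, pz]
      constructor
      · rintro ⟨hY, hD, hz⟩
        simp only [hD, ↓reduceIte] at hY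
        refine ⟨⟨hY, ?_⟩, hz⟩
        rw [← hz]
        exact hD
      · rintro ⟨⟨hY, hD⟩, hz⟩
        have hD' : ω.2.2.1 ω.2.2.2 false = true := by rw [hz]; exact hD
        refine ⟨?_, hD', hz⟩
        simp only [hD', ↓reduceIte]
        exact hY
    rw [hset, pr_indep Ps hIV (fun a b g => b = o1 ∧ g z false = true) z,
      prZ_match P Ps hgen z]
  have h0 : P.p (o0, true, z)
      = Ps.pr {ω : Prim Y01 K | ω.2.1 = o0 ∧ ω.2.2.1 z false = true} * prZ P z := by
    rw [hgen o0 true z]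
    have hset : Ps.pr {ω | obsY ω = o0 ∧ obsD ω = true ∧ pz ω = z}
        = Ps.pr {ω : Prim Y01 K |
            (ω.2.1 = o0 ∧ ω.2.2.1 z false = true) ∧ ω.2.2.2 = z} := by
      apply Ps.pr_congr
      intro ω
      simp only [Set.mem_setOf_eq, obsY, obsD, pd, pz]
      constructor
      · rintro ⟨hY, hD, hz⟩
        simp only [hD, ↓reduceIte] at hY
        refine ⟨⟨hY, ?_⟩, hz⟩
        rw [← hz]
        exact hD
      · rintro ⟨⟨hY, hD⟩, hz⟩
        have hD' : ω.2.2.1 ω.2.2.2 false = true := by rw [hz]; exact hD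
        refine ⟨?_, hD', hz⟩
        simp only [hD', ↓reduceIte]
        exact hY
    rw [hset, pr_indep Ps hIV (fun a b g => b = o0 ∧ g z false = true) z,
      prZ_match P Ps hgen z]
  have hle1 : Ps.pr {ω : Prim Y01 K | ω.2.1 = o1 ∧ ω.2.2.1 z false = true} ≤ μ := by
    apply Ps.pr_mono
    intro ω hω
    have : ω.2.1 = o1 := hω.1
    show ((ω.2.1 : Y01) : ℝ) = 1
    rw [this, coe_o1]
  have hcompl : Ps.pr {ω : Prim Y01 K | ((ω.2.1 : Y01) : ℝ) = 0} = 1 - μ := by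
    have hc : Ps.pr {ω : Prim Y01 K | ((ω.2.1 : Y01) : ℝ) = 0}
        = Ps.pr ({ω : Prim Y01 K | ((ω.2.1 : Y01) : ℝ) = 1}ᶜ) := by
      apply Ps.pr_congr
      intro ω
      simp only [Set.mem_setOf_eq, Set.mem_compl_iff]
      rcases y01_cases ω.2.1 with h | h
      · rw [h, coe_o0]; norm_num
      · rw [h, coe_o1]; norm_num
    have := Ps.pr_add_compl {ω : Prim Y01 K | ((ω.2.1 : Y01) : ℝ) = 1}
    rw [hc]
    linarith
  have hle0 : Ps.pr {ω : Prim Y01 K | ω.2.1 = o0 ∧ ω.2.2.1 z false = true} ≤ 1 - μ := by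
    rw [← hcompl]
    apply Ps.pr_mono
    intro ω hω
    have : ω.2.1 = o0 := hω.1
    show ((ω.2.1 : Y01) : ℝ) = 0
    rw [this, coe_o0]
  have hzne : prZ P z ≠ 0 := ne_of_gt (hPz z)
  constructor
  · rw [h1, mul_div_assoc, div_self hzne, mul_one, hθ]
    exact hle1
  · rw [h0, mul_div_assoc, div_self hzne, mul_one, hθ]
    linarith

end Necessity



section Sufficiency

variable {K : ℕ}

set_option maxHeartbeats 2000000 in
lemma sufficiency (P : Dist (Obs Y01 K)) [hne : Nonempty (Fin K)]
    (hPz : ∀ z : Fin K, 0 < prZ P z)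
    (hcons : ∀ z : Fin K, P.p (o1, false, z) = 0)
    (v : ℝ)
    (hb : ∀ z : Fin K, P.p (o1, true, z) / prZ P z ≤ v ∧
      v ≤ 1 - P.p (o0, true, z) / prZ P z) :
    v ∈ ThetaI P (famU K) := by
  classical
  obtain ⟨z0⟩ := hne
  set a : Fin K → ℝ := fun z => P.p (o1, true, z) / prZ P z with ha
  set bb : Fin K → ℝ := fun z => P.p (o0, true, z) / prZ P z with hbb
  have hav : ∀ z, a z ≤ v := fun z => (hb z).1
  have hvb : ∀ z, v ≤ 1 - bb z := fun z => (hb z).2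
  have ha0 : ∀ z, 0 ≤ a z := fun z => div_nonneg (P.nonneg _) (le_of_lt (hPz z))
  have hb0 : ∀ z, 0 ≤ bb z := fun z => div_nonneg (P.nonneg _) (le_of_lt (hPz z))
  have hv0 : 0 ≤ v := le_trans (ha0 z0) (hav z0)
  have hv1 : v ≤ 1 := le_trans (hvb z0) (by linarith [hb0 z0])
  set s : Finset ℝ := insert 0 (insert 1 (insert v
    (Finset.image a Finset.univ ∪ Finset.image (fun z => 1 - bb z) Finset.univ))) with hs
  have h0s : (0 : ℝ) ∈ s := by simp [hs]
  have h1s : (1 : ℝ) ∈ s := by simp [hs]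
  have hvs : v ∈ s := by simp [hs]
  have has : ∀ z, a z ∈ s := fun z => by
    simp only [hs, Finset.mem_insert, Finset.mem_union, Finset.mem_image]
    exact Or.inr (Or.inr (Or.inr (Or.inl ⟨z, Finset.mem_univ z, rfl⟩)))
  have hbs : ∀ z, 1 - bb z ∈ s := fun z => by
    simp only [hs, Finset.mem_insert, Finset.mem_union, Finset.mem_image]
    exact Or.inr (Or.inr (Or.inr (Or.inr ⟨z, Finset.mem_univ z, rfl⟩)))
  have hs0 : ∀ c ∈ s, 0 ≤ c := by
    intro c hc
    simp only [hs, Finset.mem_insert, Finset.mem_union, Finset.mem_image] at hc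
    rcases hc with h | h | h | ⟨z, _, h⟩ | ⟨z, _, h⟩ <;> subst h
    · norm_num
    · norm_num
    · exact hv0
    · exact ha0 z
    · linarith [hvb z, hv0]
  have hs1 : ∀ c ∈ s, c ≤ 1 := by
    intro c hc
    simp only [hs, Finset.mem_insert, Finset.mem_union, Finset.mem_image] at hc
    rcases hc with h | h | h | ⟨z, _, h⟩ | ⟨z, _, h⟩ <;> subst h
    · norm_num
    · norm_num
    · exact hv1
    · linarith [hav z, hv1]
    · linarith [hb0 z]
  set n : ℕ := s.card with hn
  have hnpos : 0 < n := Finset.card_pos.2 ⟨0, h0s⟩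
  set e : Fin n ≃o {c // c ∈ s} := s.orderIsoOfFin rfl with he
  set f : ℕ → ℝ := fun i =>
    (e ⟨min i (n - 1), lt_of_le_of_lt (Nat.min_le_right _ _) (by omega)⟩ : ℝ) with hf
  have fmem : ∀ i, f i ∈ s := fun i => (e _).2
  have fmono : ∀ i j, i ≤ j → f i ≤ f j := by
    intro i j hij
    exact Subtype.coe_le_coe.2 (e.le_iff_le.2 (by simp only [Fin.mk_le_mk]; omega))
  have fstrict : ∀ i j, i ≤ n - 1 → j ≤ n - 1 → i < j → f i < f j := by
    intro i j hi hj hij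
    refine Subtype.coe_lt_coe.2 (e.lt_iff_lt.2 ?_)
    simp only [Fin.mk_lt_mk]
    omega
  have hexists : ∀ c ∈ s, ∃ j : ℕ, j ≤ n - 1 ∧ f j = c := by
    intro c hc
    obtain ⟨k, hk⟩ := e.surjective ⟨c, hc⟩
    refine ⟨k.val, by omega, ?_⟩
    have : (⟨min k.val (n - 1), lt_of_le_of_lt (Nat.min_le_right _ _) (by omega)⟩ : Fin n)
        = k := by
      ext
      simp only
      omega
    rw [hf]
    simp only [this, hk]
  have hf0 : f 0 = 0 := by
    obtain ⟨j, hj, hfj⟩ := hexists 0 h0s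
    refine le_antisymm ?_ (hs0 _ (fmem 0))
    calc f 0 ≤ f j := fmono 0 j (Nat.zero_le j)
      _ = 0 := hfj
  have hftop : f (n - 1) = 1 := by
    obtain ⟨j, hj, hfj⟩ := hexists 1 h1s
    refine le_antisymm (hs1 _ (fmem _)) ?_
    calc (1 : ℝ) = f j := hfj.symm
      _ ≤ f (n - 1) := fmono j (n - 1) hj
  have m_nonneg : ∀ i : ℕ, 0 ≤ f (i + 1) - f i := by
    intro i
    linarith [fmono i (i + 1) (by omega)]
  have htot : ∑ i ∈ Finset.range (n - 1), (f (i + 1) - f i) = 1 := by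
    rw [Finset.sum_range_sub f (n - 1), hf0, hftop]
    ring
  have key : ∀ c ∈ s,
      ∑ i ∈ Finset.range (n - 1), ind (f (i + 1) ≤ c) (f (i + 1) - f i) = c := by
    intro c hc
    obtain ⟨j, hj, hfj⟩ := hexists c hc
    rw [← hfj]
    rw [tele_sum f (f j) hj (fun i hi => fmono (i + 1) j (by omega))
      (fun i hji him => not_le.2 (fstrict j (i + 1) hj (by omega) (by omega)))]
    rw [hf0]
    ring
  have key' : ∀ c ∈ s,
      ∑ i ∈ Finset.range (n - 1), ind (¬ f (i + 1) ≤ c) (f (i + 1) - f i) = 1 - c := by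
    intro c hc
    have hpt : ∀ i : ℕ, ind (¬ f (i + 1) ≤ c) (f (i + 1) - f i)
        = (f (i + 1) - f i) - ind (f (i + 1) ≤ c) (f (i + 1) - f i) := by
      intro i
      by_cases h : f (i + 1) ≤ c
      · rw [ind_neg (fun hn => hn h), ind_pos h]
        ring
      · rw [ind_pos h, ind_neg h]
        ring
    rw [Finset.sum_congr rfl fun i _ => hpt i, Finset.sum_sub_distrib, htot, key c hc]
  -- the mixture
  set Y1of : ℕ → Y01 := fun i => if f (i + 1) ≤ v then o1 else o0 with hY1of
  set Gof : ℕ → Fin K → Bool → Bool := fun i z aa =>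
    if aa then true
    else (if f (i + 1) ≤ a z ∨ 1 - bb z < f (i + 1) then true else false) with hGof
  set w : Fin (n - 1) × Fin K → ℝ := fun p => (f (p.1.val + 1) - f p.1.val) * prZ P p.2
    with hw
  set x : Fin (n - 1) × Fin K → Prim Y01 K := fun p => (o0, Y1of p.1.val, Gof p.1.val, p.2)
    with hx
  have hwnn : ∀ p, 0 ≤ w p := fun p => mul_nonneg (m_nonneg _) (le_of_lt (hPz _))
  have hwsum : ∑ p, w p = 1 := by
    rw [Fintype.sum_prod_type]
    have h1 : ∀ i : Fin (n - 1), (∑ z : Fin K, w (i, z)) = f (i.val + 1) - f i.val := by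
      intro i
      rw [hw]
      simp only
      rw [← Finset.mul_sum, sum_prZ P, mul_one]
    rw [Finset.sum_congr rfl fun i _ => h1 i]
    rw [Fin.sum_univ_eq_sum_range (fun i => f (i + 1) - f i) (n - 1)]
    exact htot
  -- splitting helpers
  have hsplit : ∀ (C : ℕ → Prop) (z : Fin K),
      (∑ p : Fin (n - 1) × Fin K, ind (C p.1.val ∧ p.2 = z) (w p))
        = prZ P z * ∑ i ∈ Finset.range (n - 1), ind (C i) (f (i + 1) - f i) := by
    intro C z
    rw [Fintype.sum_prod_type]
    have h1 : ∀ i : Fin (n - 1), (∑ z' : Fin K, ind (C i.val ∧ z' = z) (w (i, z')))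
        = ind (C i.val) (w (i, z)) :=
      fun i => sum_ind_and_eq z (fun _ => C i.val) (fun z' => w (i, z'))
    rw [Finset.sum_congr rfl fun i _ => h1 i]
    have h2 : ∀ i : Fin (n - 1), ind (C i.val) (w (i, z))
        = prZ P z * ind (C i.val) (f (i.val + 1) - f i.val) := by
      intro i
      rw [mul_ind, hw]
      simp only
      rw [mul_comm (prZ P z)]
    rw [Finset.sum_congr rfl fun i _ => h2 i, ← Finset.mul_sum]
    rw [Fin.sum_univ_eq_sum_range (fun i => ind (C i) (f (i + 1) - f i)) (n - 1)]
  have hsplit' : ∀ (C : ℕ → Prop),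
      (∑ p : Fin (n - 1) × Fin K, ind (C p.1.val) (w p))
        = ∑ i ∈ Finset.range (n - 1), ind (C i) (f (i + 1) - f i) := by
    intro C
    rw [Fintype.sum_prod_type]
    have h1 : ∀ i : Fin (n - 1), (∑ z' : Fin K, ind (C i.val) (w (i, z')))
        = ind (C i.val) (f (i.val + 1) - f i.val) := by
      intro i
      have hws : (∑ z' : Fin K, w (i, z')) = f (i.val + 1) - f i.val := by
        rw [hw]
        simp only
        rw [← Finset.mul_sum, sum_prZ P, mul_one]
      rw [sum_ind, hws]
    rw [Finset.sum_congr rfl fun i _ => h1 i]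
    rw [Fin.sum_univ_eq_sum_range (fun i => ind (C i) (f (i + 1) - f i)) (n - 1)]
  have hsplitz : ∀ z : Fin K,
      (∑ p : Fin (n - 1) × Fin K, ind (p.2 = z) (w p)) = prZ P z := by
    intro z
    rw [Fintype.sum_prod_type]
    have h1 : ∀ i : Fin (n - 1), (∑ z' : Fin K, ind (z' = z) (w (i, z'))) = w (i, z) :=
      fun i => sum_ind_right z (fun z' => w (i, z'))
    rw [Finset.sum_congr rfl fun i _ => h1 i]
    have h2 : ∀ i : Fin (n - 1), w (i, z) = prZ P z * (f (i.val + 1) - f i.val) := by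
      intro i
      rw [hw]
      simp only
      rw [mul_comm]
    rw [Finset.sum_congr rfl fun i _ => h2 i, ← Finset.mul_sum]
    rw [Fin.sum_univ_eq_sum_range (fun i => f (i + 1) - f i) (n - 1), htot, mul_one]
  -- basic facts about the components
  have hGtrue : ∀ i z, Gof i z true = true := by
    intro i z
    simp [hGof]
  have hGfalse : ∀ i z,
      (Gof i z false = true) ↔ (f (i + 1) ≤ a z ∨ 1 - bb z < f (i + 1)) := by
    intro i z
    rw [hGof]
    simp only [Bool.false_eq_true, if_false]
    by_cases h : f (i + 1) ≤ a z ∨ 1 - bb z < f (i + 1)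
    · simp [h]
    · simp [h]
  have hY1one : ∀ i, (Y1of i = o1) ↔ f (i + 1) ≤ v := by
    intro i
    rw [hY1of]
    simp only
    by_cases h : f (i + 1) ≤ v
    · simp [h]
    · simp [h]
      intro hh
      exact absurd hh.symm (Ne.symm o0_ne_o1)
  have hY1zero : ∀ i, (Y1of i = o0) ↔ ¬ f (i + 1) ≤ v := by
    intro i
    rw [hY1of]
    simp only
    by_cases h : f (i + 1) ≤ v
    · simp [h]
      exact o0_ne_o1.symm
    · simp [h]
  refine ⟨mixDist w x hwnn hwsum, ⟨?_, ?_, ?_⟩, ?_, ?_⟩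
  · -- IV validity
    intro ya yb g z
    rw [mixDist_pr, mixDist_pr, mixDist_pr]
    have e1 : ∀ p : Fin (n - 1) × Fin K,
        ind (x p ∈ {ω : Prim Y01 K | ω.1 = ya ∧ ω.2.1 = yb ∧ ω.2.2.1 = g ∧ ω.2.2.2 = z})
          (w p)
        = ind ((o0 = ya ∧ Y1of p.1.val = yb ∧ Gof p.1.val = g) ∧ p.2 = z) (w p) := by
      intro p
      refine ind_congr ?_ _
      rw [hx]
      simp only [Set.mem_setOf_eq]
      tauto
    have e2 : ∀ p : Fin (n - 1) × Fin K,
        ind (x p ∈ {ω : Prim Y01 K | ω.1 = ya ∧ ω.2.1 = yb ∧ ω.2.2.1 = g}) (w p)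
        = ind (o0 = ya ∧ Y1of p.1.val = yb ∧ Gof p.1.val = g) (w p) := by
      intro p
      refine ind_congr ?_ _
      rw [hx]
      simp only [Set.mem_setOf_eq]
    have e3 : ∀ p : Fin (n - 1) × Fin K,
        ind (x p ∈ {ω : Prim Y01 K | ω.2.2.2 = z}) (w p) = ind (p.2 = z) (w p) := by
      intro p
      refine ind_congr ?_ _
      rw [hx]
      simp only [Set.mem_setOf_eq]
    rw [Finset.sum_congr rfl fun p _ => e1 p, Finset.sum_congr rfl fun p _ => e2 p,
      Finset.sum_congr rfl fun p _ => e3 p]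
    rw [hsplit (fun i => o0 = ya ∧ Y1of i = yb ∧ Gof i = g) z,
      hsplit' (fun i => o0 = ya ∧ Y1of i = yb ∧ Gof i = g), hsplitz z]
    ring
  · -- Y(0) = 0 a.s.
    rw [mixDist_pr]
    have e1 : ∀ p : Fin (n - 1) × Fin K,
        ind (x p ∈ {ω : Prim Y01 K | ((ω.1 : Y01) : ℝ) = 0}) (w p) = w p := by
      intro p
      refine ind_pos ?_ _
      rw [hx]
      simp only [Set.mem_setOf_eq]
      exact coe_o0
    rw [Finset.sum_congr rfl fun p _ => e1 p]
    exact hwsum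
  · -- universal release
    intro z
    rw [mixDist_pr]
    have e1 : ∀ p : Fin (n - 1) × Fin K,
        ind (x p ∈ {ω : Prim Y01 K | pd ω z true = true}) (w p) = w p := by
      intro p
      refine ind_pos ?_ _
      rw [hx]
      simp only [Set.mem_setOf_eq, pd]
      exact hGtrue p.1.val z
    rw [Finset.sum_congr rfl fun p _ => e1 p]
    exact hwsum
  · -- generates
    intro y d z
    rw [mixDist_pr]
    have hmem : ∀ p : Fin (n - 1) × Fin K,
        (x p ∈ {ω : Prim Y01 K | obsY ω = y ∧ obsD ω = d ∧ pz ω = z})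
          ↔ ((if Gof p.1.val p.2 false = true then Y1of p.1.val else o0) = y
              ∧ Gof p.1.val p.2 false = d ∧ p.2 = z) := by
      intro p
      rw [hx]
      simp only [Set.mem_setOf_eq, obsY, obsD, pd, pz]
      exact Iff.rfl
    rcases y01_cases y with rfl | rfl
    · cases d
      · -- y = o0, d = false
        have e1 : ∀ p : Fin (n - 1) × Fin K,
            ind (x p ∈ {ω : Prim Y01 K | obsY ω = o0 ∧ obsD ω = false ∧ pz ω = z}) (w p)
            = ind ((f (p.1.val + 1) ≤ 1 - bb z ∧ ¬ f (p.1.val + 1) ≤ a z) ∧ p.2 = z)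
                (w p) := by
          intro p
          refine ind_congr ((hmem p).trans ?_) _
          constructor
          · rintro ⟨hY, hD, hz⟩
            subst hz
            have hD' : ¬ (f (p.1.val + 1) ≤ a p.2 ∨ 1 - bb p.2 < f (p.1.val + 1)) := by
              intro hc
              rw [(hGfalse p.1.val p.2).2 hc] at hD
              exact Bool.noConfusion hD
            push_neg at hD'
            exact ⟨⟨hD'.2, not_le.2 hD'.1⟩, rfl⟩
          · rintro ⟨⟨h1, h2⟩, hz⟩
            subst hz
            have hD' : ¬ (f (p.1.val + 1) ≤ a p.2 ∨ 1 - bb p.2 < f (p.1.val + 1)) := by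
              rintro (hc | hc)
              · exact h2 hc
              · linarith
            have hDf : Gof p.1.val p.2 false = false := by
              rcases Bool.eq_false_or_eq_true (Gof p.1.val p.2 false) with h | h
              · exact absurd ((hGfalse p.1.val p.2).1 h) hD'
              · exact h
            simp [hDf]
        rw [Finset.sum_congr rfl fun p _ => e1 p]
        rw [hsplit (fun i => f (i + 1) ≤ 1 - bb z ∧ ¬ f (i + 1) ≤ a z) z]
        have hpt : ∀ i : ℕ, ind (f (i + 1) ≤ 1 - bb z ∧ ¬ f (i + 1) ≤ a z)
              (f (i + 1) - f i)
            = ind (f (i + 1) ≤ 1 - bb z) (f (i + 1) - f i)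
              - ind (f (i + 1) ≤ a z) (f (i + 1) - f i) := by
          intro i
          by_cases h1 : f (i + 1) ≤ a z
          · have h2 : f (i + 1) ≤ 1 - bb z := le_trans h1 (by linarith [hav z, hvb z])
            rw [ind_neg (fun hc => hc.2 h1), ind_pos h2, ind_pos h1]
            ring
          · by_cases h2 : f (i + 1) ≤ 1 - bb z
            · rw [ind_pos ⟨h2, h1⟩, ind_pos h2, ind_neg h1]
              ring
            · rw [ind_neg (fun hc => h2 hc.1), ind_neg h2, ind_neg h1]
              ring
        rw [Finset.sum_congr rfl fun i _ => hpt i, Finset.sum_sub_distrib,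
          key _ (hbs z), key _ (has z)]
        have e2 : a z * prZ P z = P.p (o1, true, z) := by
          rw [ha]
          exact div_mul_cancel₀ _ (ne_of_gt (hPz z))
        have e3 : bb z * prZ P z = P.p (o0, true, z) := by
          rw [hbb]
          exact div_mul_cancel₀ _ (ne_of_gt (hPz z))
        have e4 := prZ_eq_sum P z
        have e5 := hcons z
        nlinarith [e2, e3, e4, e5]
      · -- y = o0, d = true
        have e1 : ∀ p : Fin (n - 1) × Fin K,
            ind (x p ∈ {ω : Prim Y01 K | obsY ω = o0 ∧ obsD ω = true ∧ pz ω = z}) (w p)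
            = ind ((¬ f (p.1.val + 1) ≤ 1 - bb z) ∧ p.2 = z) (w p) := by
          intro p
          refine ind_congr ((hmem p).trans ?_) _
          constructor
          · rintro ⟨hY, hD, hz⟩
            subst hz
            rw [hD, if_pos rfl] at hY
            have hvle : ¬ f (p.1.val + 1) ≤ v := (hY1zero p.1.val).1 hY
            rcases (hGfalse p.1.val p.2).1 hD with h | h
            · exact absurd (le_trans h (hav p.2)) hvle
            · exact ⟨not_le.2 h, rfl⟩
          · rintro ⟨h1, hz⟩
            subst hz
            have hgt : 1 - bb p.2 < f (p.1.val + 1) := not_le.1 h1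
            have hD : Gof p.1.val p.2 false = true :=
              (hGfalse p.1.val p.2).2 (Or.inr hgt)
            rw [hD, if_pos rfl]
            refine ⟨(hY1zero p.1.val).2 ?_, rfl, rfl⟩
            intro hc
            linarith [hvb p.2]
        rw [Finset.sum_congr rfl fun p _ => e1 p]
        rw [hsplit (fun i => ¬ f (i + 1) ≤ 1 - bb z) z, key' _ (hbs z)]
        have e3 : bb z * prZ P z = P.p (o0, true, z) := by
          rw [hbb]
          exact div_mul_cancel₀ _ (ne_of_gt (hPz z))
        nlinarith [e3]
    · cases d
      · -- y = o1, d = false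
        have e1 : ∀ p : Fin (n - 1) × Fin K,
            ind (x p ∈ {ω : Prim Y01 K | obsY ω = o1 ∧ obsD ω = false ∧ pz ω = z}) (w p)
            = 0 := by
          intro p
          refine ind_neg ?_ _
          rw [hmem p]
          rintro ⟨hY, hD, hz⟩
          rw [hD] at hY
          simp only [Bool.false_eq_true, if_false] at hY
          exact o0_ne_o1 hY
        rw [Finset.sum_congr rfl fun p _ => e1 p, Finset.sum_const_zero]
        exact (hcons z).symm ▸ (hcons z)
      · -- y = o1, d = true
        have e1 : ∀ p : Fin (n - 1) × Fin K,
            ind (x p ∈ {ω : Prim Y01 K | obsY ω = o1 ∧ obsD ω = true ∧ pz ω = z}) (w p)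
            = ind ((f (p.1.val + 1) ≤ a z) ∧ p.2 = z) (w p) := by
          intro p
          refine ind_congr ((hmem p).trans ?_) _
          constructor
          · rintro ⟨hY, hD, hz⟩
            subst hz
            rw [hD, if_pos rfl] at hY
            have hvle : f (p.1.val + 1) ≤ v := (hY1one p.1.val).1 hY
            rcases (hGfalse p.1.val p.2).1 hD with h | h
            · exact ⟨h, rfl⟩
            · exact absurd (le_trans hvle (hvb p.2)) (not_le.2 h)
          · rintro ⟨h1, hz⟩
            subst hz
            have hD : Gof p.1.val p.2 false = true :=
              (hGfalse p.1.val p.2).2 (Or.inl h1)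
            rw [hD, if_pos rfl]
            exact ⟨(hY1one p.1.val).2 (le_trans h1 (hav p.2)), rfl, rfl⟩
        rw [Finset.sum_congr rfl fun p _ => e1 p]
        rw [hsplit (fun i => f (i + 1) ≤ a z) z, key _ (has z)]
        rw [ha]
        rw [mul_comm, div_mul_cancel₀ _ (ne_of_gt (hPz z))]
  · -- theta
    rw [theta, mixDist_exp]
    have e1 : ∀ p : Fin (n - 1) × Fin K,
        w p * cfY (x p) = ind (f (p.1.val + 1) ≤ v) (w p) := by
      intro p
      have hcf : cfY (x p) = ((Y1of p.1.val : Y01) : ℝ) := by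
        rw [hx]
        simp only [cfY, pd, pz]
        simp only [hGtrue p.1.val p.2, ↓reduceIte]
      rw [hcf]
      by_cases h : f (p.1.val + 1) ≤ v
      · rw [ind_pos h, (hY1one p.1.val).2 h, coe_o1, mul_one]
      · rw [ind_neg h, (hY1zero p.1.val).2 h, coe_o0, mul_zero]
    rw [Finset.sum_congr rfl fun p _ => e1 p]
    rw [hsplit' (fun i => f (i + 1) ≤ v)]
    exact key v hvs

end Sufficiency


/-- under universal release with `Y(0) = 0`, the identified set
for the average counterfactual outcome is the intersection of the judge-specific
intervals `[P(Y=1, D=1 | Z=z), 1 − P(Y=0, D=1 | Z=z)]`. -/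
theorem statement10 {K : ℕ}
    (P : Dist (Obs Y01 K)) (hPz : ∀ z : Fin K, 0 < prZ P z)
    (hcons : ∀ z : Fin K,
      P.pr {o | (o.1 : ℝ) = 1 ∧ o.2.1 = false ∧ o.2.2 = z} = 0) :
    ThetaI P (famU K)
      = (⋂ z : Fin K,
          Set.Icc (P.pr {o | (o.1 : ℝ) = 1 ∧ o.2.1 = true ∧ o.2.2 = z} / prZ P z)
            (1 - P.pr {o | (o.1 : ℝ) = 0 ∧ o.2.1 = true ∧ o.2.2 = z} / prZ P z)) ∧
    ∀ v : ℝ, 0 ≤ v → v ≤ 1 →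
      (v ∈ ThetaI P (famU K) ↔
        ∀ z : Fin K,
          P.pr {o | (o.1 : ℝ) = 1 ∧ o.2.1 = true ∧ o.2.2 = z} / prZ P z ≤ v ∧
          v ≤ 1 - P.pr {o | (o.1 : ℝ) = 0 ∧ o.2.1 = true ∧ o.2.2 = z} / prZ P z) := by
  rcases isEmpty_or_nonempty (Fin K) with hK | hK
  · exfalso
    haveI := hK
    have h := P.sum_one
    rw [Finset.univ_eq_empty, Finset.sum_empty] at h
    exact zero_ne_one h
  · haveI := hK
    have hiff : ∀ v : ℝ, v ∈ ThetaI P (famU K) ↔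
        ∀ z : Fin K,
          P.pr {o | (o.1 : ℝ) = 1 ∧ o.2.1 = true ∧ o.2.2 = z} / prZ P z ≤ v ∧
          v ≤ 1 - P.pr {o | (o.1 : ℝ) = 0 ∧ o.2.1 = true ∧ o.2.2 = z} / prZ P z := by
      intro v
      constructor
      · rintro ⟨Ps, hfam, hgen, hθ⟩ z
        have h := necessity P hPz Ps hfam hgen z
        rw [pr_obs_one, pr_obs_zero, ← hθ]
        exact h
      · intro h
        have hcons' : ∀ z : Fin K, P.p (o1, false, z) = 0 := by
          intro z
          rw [← pr_obs_one P z false]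
          exact hcons z
        apply sufficiency P hPz hcons' v
        intro z
        have h2 := h z
        rwa [pr_obs_one, pr_obs_zero] at h2
    constructor
    · ext v
      simp only [Set.mem_iInter, Set.mem_Icc]
      exact hiff v
    · intro v _ _
      exact hiff v

end IVPol
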